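/- Let M > 1, α, β, γ ∈ ℝ with β² + γ² = 1, and let 0 ≤ s < t. Then for all ζ, y ∈ ℝ, the double integral over (ζ̄, ȳ) ∈ ℝ² of exp(−(|ζ−ζ̄+α(t−s)|² + |y−ȳ|²)/(M(t−s)) − |βζ̄ + γȳ + αβs|²/(M(1+s))) dζ̄ dȳ equals (Mπ(t−s)√(1+s)/√(1+t)) · exp(−|βζ + γy + αβt|²/(M(1+t))). -/

import Mathlib

open MeasureTheory

lemma integral_exp_quad (b c d : ℝ) (hb : 0 < b) :
    (∫ x : ℝ, Real.exp (-b * x ^ 2 + c * x + d))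
      = Real.sqrt (Real.pi / b) * Real.exp (d + c ^ 2 / (4 * b)) := by
  have h : (fun x : ℝ => Real.exp (-b * x ^ 2 + c * x + d))
      = fun x : ℝ => Real.exp (-b * (x - c / (2 * b)) ^ 2) * Real.exp (d + c ^ 2 / (4 * b)) := by
    funext x
    rw [← Real.exp_add]
    congr 1
    field_simp
    ring
  rw [h, MeasureTheory.integral_mul_const,
    MeasureTheory.integral_sub_right_eq_self (fun x : ℝ => Real.exp (-b * x ^ 2)) (c / (2 * b)),
    integral_gaussian]

theorem gaussian_convolution_line_time (M α β γ s t : ℝ) (hM : 1 < M)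
    (hunit : β ^ 2 + γ ^ 2 = 1) (hs : 0 ≤ s) (hst : s < t) (ζ y : ℝ) :
    (∫ ζb : ℝ, ∫ yb : ℝ,
        Real.exp (-((|ζ - ζb + α * (t - s)|) ^ 2 + (|y - yb|) ^ 2) / (M * (t - s))
          - (|β * ζb + γ * yb + α * β * s|) ^ 2 / (M * (1 + s)))) =
      (M * Real.pi * (t - s) * Real.sqrt (1 + s) / Real.sqrt (1 + t)) *
        Real.exp (-(|β * ζ + γ * y + α * β * t|) ^ 2 / (M * (1 + t))) := by
  have hM0 : (0:ℝ) < M := lt_trans one_pos hM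
  have hts : 0 < t - s := sub_pos.2 hst
  have hs1 : (0:ℝ) < 1 + s := by linarith
  have ht1 : (0:ℝ) < 1 + t := by linarith
  set A : ℝ := M * (t - s) with hA
  set B : ℝ := M * (1 + s) with hB
  set C : ℝ := B + γ ^ 2 * A with hC
  have hA0 : 0 < A := by positivity
  have hB0 : 0 < B := by positivity
  have hC0 : 0 < C := by positivity
  have hCA : C + β ^ 2 * A = M * (1 + t) := by
    rw [hC, hB, hA]; linear_combination M * (t - s) * hunit
  have hb1 : 0 < C / (A * B) := by positivity
  have hb2 : 0 < (C + β ^ 2 * A) / (A * C) := by positivity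
  set b1 : ℝ := C / (A * B) with hb1def
  set b2 : ℝ := (C + β ^ 2 * A) / (A * C) with hb2def
  set c2 : ℝ := 2 * (ζ + α * (t - s)) / A - 2 * β * (γ * y + α * β * s) / C with hc2def
  set d2 : ℝ := -(ζ + α * (t - s)) ^ 2 / A - (γ * y + α * β * s) ^ 2 / C with hd2def
  have inner : ∀ ζb : ℝ,
      (∫ yb : ℝ, Real.exp (-((|ζ - ζb + α * (t - s)|) ^ 2 + (|y - yb|) ^ 2) / (M * (t - s))
          - (|β * ζb + γ * yb + α * β * s|) ^ 2 / (M * (1 + s))))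
        = Real.sqrt (Real.pi / b1) * Real.exp (-b2 * ζb ^ 2 + c2 * ζb + d2) := by
    intro ζb
    set c1 : ℝ := 2 * y / A - 2 * γ * (β * ζb + α * β * s) / B with hc1def
    set d1 : ℝ := -(ζ - ζb + α * (t - s)) ^ 2 / A - y ^ 2 / A - (β * ζb + α * β * s) ^ 2 / B
      with hd1def
    have hE : (fun yb : ℝ => Real.exp (-((|ζ - ζb + α * (t - s)|) ^ 2 + (|y - yb|) ^ 2) / (M * (t - s))
          - (|β * ζb + γ * yb + α * β * s|) ^ 2 / (M * (1 + s))))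
        = fun yb : ℝ => Real.exp (-b1 * yb ^ 2 + c1 * yb + d1) := by
      funext yb
      congr 1
      rw [sq_abs, sq_abs, sq_abs, hb1def, hc1def, hd1def, hC, ← hA, ← hB]
      field_simp
      ring
    rw [hE, integral_exp_quad b1 c1 d1 hb1]
    congr 2
    rw [hb1def, hc1def, hd1def, hb2def, hc2def, hd2def, hC]
    field_simp
    ring
  simp_rw [hA, hB, inner]
  rw [MeasureTheory.integral_const_mul, integral_exp_quad b2 c2 d2 hb2, ← mul_assoc]
  have hexp : d2 + c2 ^ 2 / (4 * b2)
      = -(|β * ζ + γ * y + α * β * t|) ^ 2 / (M * (1 + t)) := by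
    rw [sq_abs, ← hCA, hb2def, hc2def, hd2def]
    field_simp
    ring
  rw [hexp]
  congr 1
  rw [← Real.sqrt_mul (by positivity)]
  have key : Real.pi / b1 * (Real.pi / b2) = (M * Real.pi * (t - s)) ^ 2 * ((1 + s) / (1 + t)) := by
    rw [hb1def, hb2def, hCA, hA, hB]
    field_simp
  rw [key, Real.sqrt_mul (sq_nonneg _), Real.sqrt_sq (by positivity),
    Real.sqrt_div hs1.le]
  ring
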